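/- Let f_x, f̄_x, f_z, f̄_z, g_x, ḡ_x, g_z, ḡ_z be monomials in a polynomial ring over ℚ such that every monomial with an x subscript is coprime to every monomial with a z subscript. Then the binomial S-polynomial satisfies S(f_x·f_z + f̄_x·f̄_z, g_x·g_z + ḡ_x·ḡ_z) = S(f_x + f̄_x, g_x + ḡ_x)₁ · S(f_z + f̄_z, g_z + ḡ_z)₁ − S(f_x + f̄_x, g_x + ḡ_x)₂ · S(f_z + f̄_z, g_z + ḡ_z)₂, where subscripts 1 and 2 denote the first and second terms of the S-polynomial formula; consequently this S-polynomial reduces to zero via the pair S(f_x + f̄_x, g_x + ḡ_x) and S(f_z + f̄_z, g_z + ḡ_z). -/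

import Mathlib

open MvPolynomial
open scoped MonomialOrder

/-- The leading exponent (leading monomial) of a multivariate polynomial with
respect to a monomial order. -/
noncomputable def leadExp {σ : Type*} (m : MonomialOrder σ)
    (f : MvPolynomial σ ℚ) : σ →₀ ℕ :=
  m.toSyn.symm (f.support.sup fun d => m.toSyn d)

/-- The monomial with exponent `a` and coefficient `1` in `ℚ[x']`. -/
noncomputable def mono {σ : Type*} (a : σ →₀ ℕ) : MvPolynomial σ ℚ :=
  monomial a 1

/-- The S-polynomial of the binomials `p₁ + p₂` and `q₁ + q₂` (monomials with their
leading terms written first):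
`S(p₁+p₂, q₁+q₂) = (q₁/gcd(p₁,q₁))·p₂ − (p₁/gcd(p₁,q₁))·q₂`. -/
noncomputable def sBin {σ : Type*} (p₁ p₂ q₁ q₂ : σ →₀ ℕ) : MvPolynomial σ ℚ :=
  mono (q₁ - p₁ ⊓ q₁ + p₂) - mono (p₁ - p₁ ⊓ q₁ + q₂)

private lemma mono_mul {σ : Type*} (a b : σ →₀ ℕ) :
    (mono a : MvPolynomial σ ℚ) * mono b = mono (a + b) := by
  simp [mono, monomial_mul]

private lemma support_mono_sub {σ : Type*} {a b : σ →₀ ℕ} {d : σ →₀ ℕ}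
    (hd : d ∈ (mono a - mono b : MvPolynomial σ ℚ).support) : d = a ∨ d = b := by
  classical
  have := support_sub σ (mono a) (mono b) hd
  simpa [mono, support_monomial] using this

private lemma mem_support_mono_sub_left {σ : Type*} {a b : σ →₀ ℕ} (h : a ≠ b) :
    a ∈ (mono a - mono b : MvPolynomial σ ℚ).support := by
  classical
  simp [mono, mem_support_iff, coeff_sub, coeff_monomial, Ne.symm h]

private lemma mem_support_mono_sub_right {σ : Type*} {a b : σ →₀ ℕ} (h : a ≠ b) :
    b ∈ (mono a - mono b : MvPolynomial σ ℚ).support := by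
  classical
  simp [mono, mem_support_iff, coeff_sub, coeff_monomial, h]

private lemma toSyn_leadExp_le {σ : Type*} (m : MonomialOrder σ)
    {f g : MvPolynomial σ ℚ}
    (h : ∀ d ∈ f.support, m.toSyn d ≤ m.toSyn (leadExp m g)) :
    m.toSyn (leadExp m f) ≤ m.toSyn (leadExp m g) := by
  rw [leadExp, AddEquiv.apply_symm_apply]
  exact Finset.sup_le h

private lemma le_toSyn_leadExp {σ : Type*} (m : MonomialOrder σ)
    {d : σ →₀ ℕ} {g : MvPolynomial σ ℚ} (h : d ∈ g.support) :
    m.toSyn d ≤ m.toSyn (leadExp m g) := by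
  rw [leadExp, AddEquiv.apply_symm_apply]
  exact Finset.le_sup h

/-- Separating interior and closure variables:  if every monomial with an `x`
subscript is coprime to every monomial with a `z` subscript, then
`S(f_x·f_z + f̄_x·f̄_z, g_x·g_z + ḡ_x·ḡ_z)` equals the product of the first terms of
`S(f_x + f̄_x, g_x + ḡ_x)` and `S(f_z + f̄_z, g_z + ḡ_z)` minus the product of their
second terms; consequently it reduces to zero via that pair of S-polynomials
(a standard representation with the leading-monomial bound exists). -/
theorem sBin_product_split {σ : Type*} (m : MonomialOrder σ)
    (fx fbx gx gbx fz fbz gz gbz : σ →₀ ℕ)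
    (hcop : ∀ a ∈ ({fx, fbx, gx, gbx} : Set (σ →₀ ℕ)),
      ∀ b ∈ ({fz, fbz, gz, gbz} : Set (σ →₀ ℕ)), a ⊓ b = 0) :
    sBin (fx + fz) (fbx + fbz) (gx + gz) (gbx + gbz) =
        mono (gx - fx ⊓ gx + fbx) * mono (gz - fz ⊓ gz + fbz) -
          mono (fx - fx ⊓ gx + gbx) * mono (fz - fz ⊓ gz + gbz) ∧
    ∃ q₁ q₂ : MvPolynomial σ ℚ,
      sBin (fx + fz) (fbx + fbz) (gx + gz) (gbx + gbz) =
          q₁ * sBin fx fbx gx gbx + q₂ * sBin fz fbz gz gbz ∧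
      (leadExp m (q₁ * sBin fx fbx gx gbx) ≼[m]
        leadExp m (sBin (fx + fz) (fbx + fbz) (gx + gz) (gbx + gbz))) ∧
      (leadExp m (q₂ * sBin fz fbz gz gbz) ≼[m]
        leadExp m (sBin (fx + fz) (fbx + fbz) (gx + gz) (gbx + gbz))) := by
  classical
  have hp : ∀ a ∈ ({fx, fbx, gx, gbx} : Set (σ →₀ ℕ)),
      ∀ b ∈ ({fz, fbz, gz, gbz} : Set (σ →₀ ℕ)), ∀ i, min (a i) (b i) = 0 := by
    intro a ha b hb i
    have h := hcop a ha b hb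
    have := DFunLike.congr_fun h i
    simpa [Finsupp.inf_apply] using this
  have h11 := hp fx (by simp) fz (by simp)
  have h12 := hp fx (by simp) fbz (by simp)
  have h13 := hp fx (by simp) gz (by simp)
  have h14 := hp fx (by simp) gbz (by simp)
  have h21 := hp fbx (by simp) fz (by simp)
  have h22 := hp fbx (by simp) fbz (by simp)
  have h23 := hp fbx (by simp) gz (by simp)
  have h24 := hp fbx (by simp) gbz (by simp)
  have h31 := hp gx (by simp) fz (by simp)
  have h32 := hp gx (by simp) fbz (by simp)
  have h33 := hp gx (by simp) gz (by simp)
  have h34 := hp gx (by simp) gbz (by simp)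
  have h41 := hp gbx (by simp) fz (by simp)
  have h42 := hp gbx (by simp) fbz (by simp)
  have h43 := hp gbx (by simp) gz (by simp)
  have h44 := hp gbx (by simp) gbz (by simp)
  set A1 := gx - fx ⊓ gx + fbx with hA1
  set A2 := fx - fx ⊓ gx + gbx with hA2
  set B1 := gz - fz ⊓ gz + fbz with hB1
  set B2 := fz - fz ⊓ gz + gbz with hB2
  have e1 : (gx + gz) - (fx + fz) ⊓ (gx + gz) + (fbx + fbz) = A1 + B1 := by
    ext i
    simp only [hA1, hB1, Finsupp.add_apply, Finsupp.tsub_apply, Finsupp.inf_apply]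
    have := h13 i; have := h31 i
    omega
  have e2 : (fx + fz) - (fx + fz) ⊓ (gx + gz) + (gbx + gbz) = A2 + B2 := by
    ext i
    simp only [hA2, hB2, Finsupp.add_apply, Finsupp.tsub_apply, Finsupp.inf_apply]
    have := h13 i; have := h31 i
    omega
  have hbig : sBin (fx + fz) (fbx + fbz) (gx + gz) (gbx + gbz)
      = mono (A1 + B1) - mono (A2 + B2) := by
    rw [sBin, e1, e2]
  have hsx : sBin fx fbx gx gbx = mono A1 - mono A2 := rfl
  have hsz : sBin fz fbz gz gbz = mono B1 - mono B2 := rfl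
  refine ⟨by rw [hbig, mono_mul, mono_mul], ?_⟩
  -- the degenerate case helper
  by_cases hdeg : A1 + B1 = A2 + B2
  · -- then A1 = A2 and B1 = B2, so everything vanishes
    have hAB : A1 = A2 ∧ B1 = B2 := by
      constructor <;> ext i <;>
      · have := DFunLike.congr_fun hdeg i
        simp only [hA1, hA2, hB1, hB2, Finsupp.add_apply, Finsupp.tsub_apply,
          Finsupp.inf_apply] at this ⊢
        have := h11 i; have := h12 i; have := h13 i; have := h14 i
        have := h21 i; have := h22 i; have := h23 i; have := h24 i
        have := h31 i; have := h32 i; have := h33 i; have := h34 i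
        have := h41 i; have := h42 i; have := h43 i; have := h44 i
        omega
    have hx0 : sBin fx fbx gx gbx = 0 := by rw [hsx, hAB.1, sub_self]
    have hz0 : sBin fz fbz gz gbz = 0 := by rw [hsz, hAB.2, sub_self]
    refine ⟨mono B1, mono A2, ?_, ?_, ?_⟩
    · rw [hbig, hdeg, sub_self, hx0, hz0, mul_zero, mul_zero, add_zero]
    · rw [hx0, mul_zero]
      exact toSyn_leadExp_le m (fun d hd => by simp at hd)
    · rw [hz0, mul_zero]
      exact toSyn_leadExp_le m (fun d hd => by simp at hd)
  · have hm1 : m.toSyn (A1 + B1) ≤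
        m.toSyn (leadExp m (sBin (fx + fz) (fbx + fbz) (gx + gz) (gbx + gbz))) := by
      apply le_toSyn_leadExp
      rw [hbig]
      exact mem_support_mono_sub_left hdeg
    have hm2 : m.toSyn (A2 + B2) ≤
        m.toSyn (leadExp m (sBin (fx + fz) (fbx + fbz) (gx + gz) (gbx + gbz))) := by
      apply le_toSyn_leadExp
      rw [hbig]
      exact mem_support_mono_sub_right hdeg
    rcases le_total (m.toSyn A2) (m.toSyn A1) with hA | hA
    · -- q₁ = mono B1, q₂ = mono A2 ; middle exponent A2 + B1 ≤ A1 + B1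
      have hmid : m.toSyn (A2 + B1) ≤
          m.toSyn (leadExp m (sBin (fx + fz) (fbx + fbz) (gx + gz) (gbx + gbz))) := by
        refine le_trans ?_ hm1
        have h := add_le_add_left hA (m.toSyn B1)
        rw [← map_add, ← map_add] at h
        exact h
      have q1eq : mono B1 * sBin fx fbx gx gbx = mono (A1 + B1) - mono (A2 + B1) := by
        rw [hsx, mul_sub, mono_mul, mono_mul, add_comm B1 A1, add_comm B1 A2]
      have q2eq : mono A2 * sBin fz fbz gz gbz = mono (A2 + B1) - mono (A2 + B2) := by
        rw [hsz, mul_sub, mono_mul, mono_mul]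
      refine ⟨mono B1, mono A2, ?_, ?_, ?_⟩
      · rw [hbig, q1eq, q2eq]; ring
      · apply toSyn_leadExp_le
        intro d hd
        rw [q1eq] at hd
        rcases support_mono_sub hd with h | h
        · rw [h]; exact hm1
        · rw [h]; exact hmid
      · apply toSyn_leadExp_le
        intro d hd
        rw [q2eq] at hd
        rcases support_mono_sub hd with h | h
        · rw [h]; exact hmid
        · rw [h]; exact hm2
    · -- q₁ = mono B2, q₂ = mono A1 ; middle exponent A1 + B2 ≤ A2 + B2
      have hmid : m.toSyn (A1 + B2) ≤
          m.toSyn (leadExp m (sBin (fx + fz) (fbx + fbz) (gx + gz) (gbx + gbz))) := by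
        refine le_trans ?_ hm2
        have h := add_le_add_left hA (m.toSyn B2)
        rw [← map_add, ← map_add] at h
        exact h
      have q1eq : mono B2 * sBin fx fbx gx gbx = mono (A1 + B2) - mono (A2 + B2) := by
        rw [hsx, mul_sub, mono_mul, mono_mul, add_comm B2 A1, add_comm B2 A2]
      have q2eq : mono A1 * sBin fz fbz gz gbz = mono (A1 + B1) - mono (A1 + B2) := by
        rw [hsz, mul_sub, mono_mul, mono_mul]
      refine ⟨mono B2, mono A1, ?_, ?_, ?_⟩
      · rw [hbig, q1eq, q2eq]; ring
      · apply toSyn_leadExp_le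
        intro d hd
        rw [q1eq] at hd
        rcases support_mono_sub hd with h | h
        · rw [h]; exact hmid
        · rw [h]; exact hm2
      · apply toSyn_leadExp_le
        intro d hd
        rw [q2eq] at hd
        rcases support_mono_sub hd with h | h
        · rw [h]; exact hm1
        · rw [h]; exact hmid
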